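/- If a graph G contains a (k,r)-fan set, then adm_r(G) ≥ k; conversely, adm_r(G) equals the largest k such that G contains a (k,r)-fan set. -/

import Mathlib

variable {V : Type*}

/-- A depth-`r` `v`–`A` fan of order `k`. -/
def IsFan (G : SimpleGraph V) (r : ℕ) (v : V) (A : Set V) (k : ℕ) : Prop :=
  ∃ (e : Fin k → V) (P : ∀ i, G.Walk v (e i)),
    Function.Injective e ∧
    (∀ i, e i ∈ A ∧ (P i).IsPath ∧ (P i).length ≤ r ∧
      ∀ w ∈ (P i).support, w ≠ v → w ≠ e i → w ∉ A) ∧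
    (∀ i j, i ≠ j → ∀ w, w ∈ (P i).support → w ∈ (P j).support → w = v)

noncomputable def adm [Fintype V] (G : SimpleGraph V) (r : ℕ) : ℕ :=
  sInf {k | ∃ π : LinearOrder V, ∀ v m, IsFan G r v {u | π.le u v} m → m ≤ k}

/-- A `(k,r)`-fan set: every element of `A` admits a depth-`r` fan of order `k` into `A`. -/
def IsFanSet (G : SimpleGraph V) (r k : ℕ) (A : Set V) : Prop :=
  ∀ a ∈ A, IsFan G r a A k

lemma isFan_mono {G : SimpleGraph V} {r : ℕ} {v : V} {A : Set V} {k m : ℕ}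
    (h : IsFan G r v A k) (hm : m ≤ k) : IsFan G r v A m := by
  obtain ⟨e, P, hinj, hprop, hdisj⟩ := h
  refine ⟨fun i => e (Fin.castLE hm i), fun i => P (Fin.castLE hm i),
    fun i j hij => (Fin.castLE_injective hm) (hinj hij), fun i => hprop _, ?_⟩
  intro i j hij w hwi hwj
  exact hdisj _ _ (fun h => hij (Fin.castLE_injective hm h)) w hwi hwj

lemma isFan_card_le [Fintype V] {G : SimpleGraph V} {r : ℕ} {v : V} {A : Set V} {k : ℕ}
    (h : IsFan G r v A k) : k ≤ Fintype.card V := by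
  obtain ⟨e, _, hinj, _, _⟩ := h
  simpa using Fintype.card_le_of_injective e hinj

/-- Truncate a path ending in `B` at the first vertex of `B` it meets (after the start). -/
lemma trunc {G : SimpleGraph V} (B : Set V) :
    ∀ {a b : V} (P : G.Walk a b), P.IsPath → b ∈ B →
    ∃ (c : V) (Q : G.Walk a c), c ∈ B ∧ Q.IsPath ∧ Q.length ≤ P.length ∧
      (∀ w ∈ Q.support, w ≠ a → w ≠ c → w ∉ B) ∧
      (∀ w ∈ Q.support, w ∈ P.support) ∧ (c = a → P.length = 0) := by
  intro a b P
  induction P with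
  | nil =>
      intro _ hb
      exact ⟨_, SimpleGraph.Walk.nil, hb, SimpleGraph.Walk.IsPath.nil, le_refl 0,
        by simp, by simp, fun _ => rfl⟩
  | @cons u v' b h p ih =>
      intro hP hb
      have hp : p.IsPath := (SimpleGraph.Walk.cons_isPath_iff h p).1 hP |>.1
      have hu : u ∉ p.support := (SimpleGraph.Walk.cons_isPath_iff h p).1 hP |>.2
      by_cases hv : v' ∈ B
      · refine ⟨v', SimpleGraph.Walk.cons h SimpleGraph.Walk.nil, hv, ?_, ?_, ?_, ?_, ?_⟩
        · simp [SimpleGraph.Walk.cons_isPath_iff, h.ne]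
        · simp
        · intro w hw hwa hwc
          simp only [SimpleGraph.Walk.support_cons, SimpleGraph.Walk.support_nil,
            List.mem_cons, List.mem_singleton] at hw
          rcases hw with rfl | rfl | h'
          · exact absurd rfl hwa
          · exact absurd rfl hwc
          · exact absurd h' (by simp)
        · intro w hw
          simp only [SimpleGraph.Walk.support_cons, SimpleGraph.Walk.support_nil,
            List.mem_cons, List.mem_singleton] at hw ⊢
          rcases hw with rfl | rfl | h'
          · exact Or.inl rfl
          · exact Or.inr (p.start_mem_support)
          · exact absurd h' (by simp)
        · intro hc; exact absurd hc h.ne'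
      · obtain ⟨c, Q, hcB, hQp, hlen, hint, hsub, hnil⟩ := ih hp hb
        have hcu : c ≠ u := by
          intro hcu
          exact hu (hcu ▸ hsub c Q.end_mem_support)
        refine ⟨c, SimpleGraph.Walk.cons h Q, hcB, ?_, ?_, ?_, ?_, fun hc => absurd hc hcu⟩
        · rw [SimpleGraph.Walk.cons_isPath_iff]
          exact ⟨hQp, fun hQ => hu (hsub u hQ)⟩
        · simpa using Nat.succ_le_succ hlen
        · intro w hw hwa hwc
          simp only [SimpleGraph.Walk.support_cons, List.mem_cons] at hw
          rcases hw with rfl | hw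
          · exact absurd rfl hwa
          · by_cases hwv : w = v'
            · exact hwv ▸ hv
            · exact hint w hw hwv hwc
        · intro w hw
          simp only [SimpleGraph.Walk.support_cons, List.mem_cons] at hw ⊢
          rcases hw with rfl | hw
          · exact Or.inl rfl
          · exact Or.inr (hsub w hw)

/-- From a fan into `A` based at the `π`-maximum of `A`, get a fan into the down-set. -/
lemma fan_downset [Fintype V] {G : SimpleGraph V} {r k : ℕ} {A : Set V}
    (hA : A.Nonempty) (hFS : IsFanSet G r k A) (π : LinearOrder V) :
    ∃ a, IsFan G r a {u | π.le u a} k := by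
  classical
  letI := π
  obtain ⟨a, ha, hmax⟩ := Finset.exists_max_image A.toFinite.toFinset id
    ((Set.Finite.toFinset_nonempty _).2 hA)
  rw [Set.Finite.mem_toFinset] at ha
  have hmax' : ∀ u ∈ A, π.le u a := by
    intro u hu
    exact hmax u (A.toFinite.mem_toFinset.2 hu)
  obtain ⟨e, P, hinj, hprop, hdisj⟩ := hFS a ha
  have htr := fun i => trunc {u | π.le u a} (P i) (hprop i).2.1
    (hmax' (e i) (hprop i).1)
  choose c Q hcB hQp hlen hint hsub hnil using htr
  refine ⟨a, c, Q, ?_, fun i => ⟨hcB i, hQp i, (hlen i).trans (hprop i).2.2.1, hint i⟩, ?_⟩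
  · intro i j hij
    by_contra hne
    have hci : c i ∈ (P i).support := hsub i _ (Q i).end_mem_support
    have hcj : c i ∈ (P j).support := hij ▸ hsub j _ (Q j).end_mem_support
    have hca : c i = a := by
      by_cases h' : i = j
      · exact absurd h' hne
      · exact hdisj i j h' _ hci hcj
    have h1 : e i = a := (SimpleGraph.Walk.eq_of_length_eq_zero (hnil i hca)).symm
    have h2 : e j = a := (SimpleGraph.Walk.eq_of_length_eq_zero (hnil j (hij ▸ hca))).symm
    exact hne (hinj (h1.trans h2.symm))
  · intro i j hij w hwi hwj
    exact hdisj i j hij w (hsub i w hwi) (hsub j w hwj)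

/-- Greedy elimination: if every nonempty set has a low-fan vertex, we can order `S`. -/
lemma greedy [Fintype V] {G : SimpleGraph V} {r : ℕ} (c' : ℕ)
    (H : ∀ A : Set V, A.Nonempty → ∃ a ∈ A, ∀ m, IsFan G r a A m → m ≤ c') :
    ∀ S : Finset V, ∃ L : List V, L.Nodup ∧ (∀ v, v ∈ L ↔ v ∈ S) ∧
      ∀ (i : ℕ) (hi : i < L.length), ∀ m,
        IsFan G r L[i] {u | u ∈ L.take (i+1)} m → m ≤ c' := by
  classical
  intro S
  induction S using Finset.strongInduction with
  | _ S ih =>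
    rcases S.eq_empty_or_nonempty with rfl | hS
    · exact ⟨[], by simp, by simp, fun i hi => by simp at hi⟩
    · obtain ⟨a, ha, hfan⟩ := H (↑S) (by simpa using hS)
      have ha' : a ∈ S := by simpa using ha
      obtain ⟨L', hnd', hmem', hpos'⟩ := ih (S.erase a) (Finset.erase_ssubset ha')
      have haL' : a ∉ L' := by
        intro h
        exact (Finset.mem_erase.1 ((hmem' a).1 h)).1 rfl
      refine ⟨L' ++ [a], ?_, ?_, ?_⟩
      · simp [List.nodup_append, hnd', haL']
        exact fun x hx h => haL' (h ▸ hx)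
      · intro v
        simp only [List.mem_append, List.mem_singleton, hmem', Finset.mem_erase]
        constructor
        · rintro (⟨_, h⟩ | rfl) <;> [exact h; exact ha']
        · intro hv
          by_cases hva : v = a
          · exact Or.inr hva
          · exact Or.inl ⟨hva, hv⟩
      · intro i hi m hm
        simp only [List.length_append, List.length_singleton] at hi
        rcases Nat.lt_or_ge i L'.length with hlt | hge
        · have hget : (L' ++ [a])[i] = L'[i] := List.getElem_append_left hlt
          have htake : (L' ++ [a]).take (i+1) = L'.take (i+1) :=
            List.take_append_of_le_length hlt
          rw [hget, htake] at hm
          exact hpos' i hlt m hm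
        · have hil : i = L'.length := by omega
          have hget : (L' ++ [a])[i] = a := List.getElem_concat_length hil _
          have htake : (L' ++ [a]).take (i+1) = L' ++ [a] := by
            apply List.take_of_length_le
            simp [hil]
          rw [hget, htake] at hm
          have hset : {u | u ∈ L' ++ [a]} = (↑S : Set V) := by
            ext u
            simp only [Set.mem_setOf_eq, Finset.coe_sort_coe, List.mem_append,
              List.mem_singleton]
            constructor
            · rintro (h | rfl)
              · exact Finset.mem_coe.2 (Finset.mem_of_mem_erase ((hmem' u).1 h))
              · exact Finset.mem_coe.2 ha'
            · intro hu
              by_cases hua : u = a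
              · exact Or.inr hua
              · exact Or.inl ((hmem' u).2 (Finset.mem_erase.2 ⟨hua, Finset.mem_coe.1 hu⟩))
          rw [hset] at hm
          exact hfan m hm

theorem stmt7 [Fintype V] (G : SimpleGraph V) (r : ℕ) (hr : 0 < r) :
    (∀ k, (∃ A : Set V, A.Nonempty ∧ IsFanSet G r k A) → k ≤ adm G r) ∧
    adm G r = sSup {k | ∃ A : Set V, A.Nonempty ∧ IsFanSet G r k A} := by
  classical
  set Sinf := {k | ∃ π : LinearOrder V, ∀ v m, IsFan G r v {u | π.le u v} m → m ≤ k} with hSinf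
  set Ssup := {k | ∃ A : Set V, A.Nonempty ∧ IsFanSet G r k A} with hSsup
  have hne : Sinf.Nonempty := by
    refine ⟨Fintype.card V, LinearOrder.lift' (Fintype.equivFin V) (Fintype.equivFin V).injective,
      fun v m hm => isFan_card_le hm⟩
  have part1 : ∀ k ∈ Ssup, k ≤ adm G r := by
    rintro k ⟨A, hA, hFS⟩
    apply le_csInf hne
    rintro j ⟨π, hπ⟩
    obtain ⟨a, hfan⟩ := fan_downset hA hFS π
    exact hπ a k hfan
  refine ⟨fun k hk => part1 k hk, ?_⟩
  have hsup_le : sSup Ssup ≤ adm G r := by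
    rcases Ssup.eq_empty_or_nonempty with h | h
    · simp [h]
    · exact csSup_le h part1
  have hle_sup : adm G r ≤ sSup Ssup := by
    by_cases hc : adm G r = 0
    · simp [hc]
    · have hcS : adm G r ∈ Ssup := by
        by_contra hcs
        have H : ∀ A : Set V, A.Nonempty → ∃ a ∈ A, ∀ m, IsFan G r a A m → m ≤ adm G r - 1 := by
          intro A hA
          have : ¬ IsFanSet G r (adm G r) A := fun hFS => hcs ⟨A, hA, hFS⟩
          rw [IsFanSet] at this
          push_neg at this
          obtain ⟨a, ha, hfan⟩ := this
          refine ⟨a, ha, fun m hm => ?_⟩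
          by_contra hmle
          exact hfan (isFan_mono hm (by omega))
        obtain ⟨L, hnd, hmem, hpos⟩ := greedy (G := G) (r := r) (adm G r - 1) H Finset.univ
        have hmemL : ∀ v, v ∈ L := fun v => (hmem v).2 (Finset.mem_univ v)
        have hinj : Function.Injective (fun v => List.idxOf v L) := by
          intro u v huv
          exact (List.idxOf_inj (hmemL u)).1 huv
        have hbound : (adm G r - 1) ∈ Sinf := by
          refine ⟨LinearOrder.lift' (fun v => List.idxOf v L) hinj, ?_⟩
          intro v m hm
          have hvi : List.idxOf v L < L.length := List.idxOf_lt_length_iff.2 (hmemL v)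
          have hgv : L[List.idxOf v L] = v := List.getElem_idxOf hvi
          have hset : {u | (LinearOrder.lift' (fun v => List.idxOf v L) hinj).le u v}
              = {u | u ∈ L.take (List.idxOf v L + 1)} := by
            ext u
            have hui : List.idxOf u L < L.length := List.idxOf_lt_length_iff.2 (hmemL u)
            simp only [Set.mem_setOf_eq]
            constructor
            · intro hle
              have hle' : List.idxOf u L ≤ List.idxOf v L := hle
              rw [List.mem_take_iff_getElem]
              exact ⟨List.idxOf u L, by omega, List.getElem_idxOf hui⟩
            · intro hu
              rw [List.mem_take_iff_getElem] at hu
              obtain ⟨j, hj, hju⟩ := hu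
              have hj' : j < L.length := by
                simp only [lt_inf_iff] at hj; exact hj.2
              have : L[j] = L[List.idxOf u L] := by
                rw [hju, List.getElem_idxOf hui]
              have hjeq : j = List.idxOf u L := (hnd.getElem_inj_iff).1 this
              show List.idxOf u L ≤ List.idxOf v L
              simp only [lt_inf_iff] at hj
              omega
          rw [hset] at hm
          have := hpos (List.idxOf v L) hvi m (by rwa [hgv])
          exact this
        have : adm G r ≤ adm G r - 1 := csInf_le (OrderBot.bddBelow _) hbound
        omega
      exact le_csSup ⟨Fintype.card V, by
        rintro k ⟨A, hA, hFS⟩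
        obtain ⟨a, ha⟩ := hA
        exact isFan_card_le (hFS a ha)⟩ hcS
  omega
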